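/- Let R be a unital associative F-algebra with an idempotent e such that the two-sided ideal of R generated by e equals R and the two-sided ideal of R generated by 1−e equals R. Then the Lie algebra [R,R] (the Lie subalgebra of R⁽⁻⁾ generated by all commutators ab − ba, a,b ∈ R) is generated as a Lie algebra by the subset eR(1−e) ∪ (1−e)Re. -/

import Mathlib

open Pointwise

attribute [local instance] LieRing.ofAssociativeRing

theorem aux_corner (F : Type*) [Field F] (hchar : (2 : F) ≠ 0)
    (R : Type*) [Ring R] [Algebra F R]
    (e : R) (he : e * e = e)
    (hI : TwoSidedIdeal.span {1 - e} = (⊤ : TwoSidedIdeal R)) (x y : R) :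
    ⁅e * x * e, e * y * e⁆ ∈ LieSubalgebra.lieSpan F R
      ({z | ∃ r : R, z = e * r * (1 - e)} ∪ {z | ∃ r : R, z = (1 - e) * r * e}) := by
  set L := LieSubalgebra.lieSpan F R
      ({z | ∃ r : R, z = e * r * (1 - e)} ∪ {z | ∃ r : R, z = (1 - e) * r * e}) with hL
  have hmemL : ∀ r : R, e * r * (1 - e) ∈ L := fun r =>
    LieSubalgebra.subset_lieSpan (Or.inl ⟨r, rfl⟩)
  have hmemR : ∀ r : R, (1 - e) * r * e ∈ L := fun r =>
    LieSubalgebra.subset_lieSpan (Or.inr ⟨r, rfl⟩)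
  set u := e * x * e with hu
  set v := e * y * e with hv
  -- the key linear functional
  have key : ∀ t : R, t ∈ AddSubgroup.closure (Set.univ * ({1 - e} : Set R) * Set.univ) →
      u*(e*t*e)*v - v*(e*t*e)*u + (e*t*e)*(u*v - v*u) ∈ L := by
    intro t ht
    refine AddSubgroup.closure_induction ?_ ?_ ?_ ?_ ht
    · rintro z ⟨w, ⟨a, -, c, rfl, rfl⟩, b, -, rfl⟩
      -- z = (a * (1-e)) * b
      set p := e * a * (1 - e) with hp
      set q := (1 - e) * b * e with hq
      have identity : ∀ U V : R, ⁅U*p, q*V⁆ - ⁅V*p, q*U⁆ + ⁅p, q*(U*V - V*U)⁆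
          = U*(p*q)*V - V*(p*q)*U + (p*q)*(U*V - V*U) := by
        intro U V
        simp only [Ring.lie_def]
        noncomm_ring
      have hpq : p * q = e * (a * (1 - e) * b) * e := by
        rw [hp, hq]
        have hf : (1-e)*(1-e) = (1-e) := by
          rw [mul_sub, mul_one, sub_mul, one_mul, he]; abel
        rw [show e*a*(1-e)*((1-e)*b*e) = e*a*((1-e)*(1-e))*(b*e) by noncomm_ring, hf]
        noncomm_ring
      have hee : ∀ z : R, e*(e*z) = e*z := fun z => by rw [← mul_assoc, he]
      rw [← hpq, ← identity u v]
      have h1 : u * p ∈ L := by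
        rw [hu, hp, show e*x*e*(e*a*(1-e)) = e*(x*e*e*a)*(1-e) by noncomm_ring]
        exact hmemL _
      have h2 : q * v ∈ L := by
        rw [hv, hq, show (1-e)*b*e*(e*y*e) = (1-e)*(b*e*e*y)*e by noncomm_ring]
        exact hmemR _
      have h3 : v * p ∈ L := by
        rw [hv, hp, show e*y*e*(e*a*(1-e)) = e*(y*e*e*a)*(1-e) by noncomm_ring]
        exact hmemL _
      have h4 : q * u ∈ L := by
        rw [hu, hq, show (1-e)*b*e*(e*x*e) = (1-e)*(b*e*e*x)*e by noncomm_ring]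
        exact hmemR _
      have h5 : p ∈ L := by rw [hp]; exact hmemL _
      have h6 : q * (u*v - v*u) ∈ L := by
        have : q * (u*v - v*u) = (1-e)*(b*(e*x*e*(e*y*e) - e*y*e*(e*x*e)))*e := by
          rw [hu, hv, hq]
          simp only [mul_sub, sub_mul, mul_assoc, he, hee]
        rw [this]; exact hmemR _
      exact add_mem (sub_mem (L.lie_mem h1 h2) (L.lie_mem h3 h4)) (L.lie_mem h5 h6)
    · have : (0:R) = u*(e*0*e)*v - v*(e*0*e)*u + (e*0*e)*(u*v - v*u) := by noncomm_ring
      rw [← this]; exact L.zero_mem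
    · intro s t _ _ hs ht
      have : u*(e*(s+t)*e)*v - v*(e*(s+t)*e)*u + (e*(s+t)*e)*(u*v - v*u)
          = (u*(e*s*e)*v - v*(e*s*e)*u + (e*s*e)*(u*v - v*u))
            + (u*(e*t*e)*v - v*(e*t*e)*u + (e*t*e)*(u*v - v*u)) := by noncomm_ring
      rw [this]; exact add_mem hs ht
    · intro t _ ht
      have : u*(e*(-t)*e)*v - v*(e*(-t)*e)*u + (e*(-t)*e)*(u*v - v*u)
          = -(u*(e*t*e)*v - v*(e*t*e)*u + (e*t*e)*(u*v - v*u)) := by noncomm_ring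
      rw [this]; exact neg_mem ht
  have heMem : (e : R) ∈ AddSubgroup.closure (Set.univ * ({1 - e} : Set R) * Set.univ) := by
    rw [← TwoSidedIdeal.mem_span_iff_mem_addSubgroup_closure, hI]
    trivial
  have h2w := key e heMem
  have hexp : u*(e*e*e)*v - v*(e*e*e)*u + (e*e*e)*(u*v - v*u) = ⁅u,v⁆ + ⁅u,v⁆ := by
    simp only [Ring.lie_def, hu, hv]
    have hee : ∀ z : R, e*(e*z) = e*z := fun z => by rw [← mul_assoc, he]
    simp only [mul_assoc, mul_add, mul_sub, add_mul, sub_mul, he, hee]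
  rw [hexp] at h2w
  have : (⁅u,v⁆ : R) = (2 : F)⁻¹ • (⁅u,v⁆ + ⁅u,v⁆) := by
    rw [← two_smul F, smul_smul, inv_mul_cancel₀ hchar, one_smul]
  rw [this]
  exact L.smul_mem _ h2w

/-- **Lemma 1.**  If `R` is a unital associative `F`-algebra with an idempotent `e` such
that the two-sided ideals generated by `e` and by `1 - e` are both all of `R`, then the
Lie algebra `[R,R]` is generated as a Lie algebra by `eR(1-e) ∪ (1-e)Re`. -/
theorem lie_commutator_generated_by_offdiagonal_peirce
    (F : Type*) [Field F] (hchar : (2 : F) ≠ 0)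
    (R : Type*) [Ring R] [Algebra F R]
    (e : R) (he : e * e = e)
    (hIe : TwoSidedIdeal.span {e} = (⊤ : TwoSidedIdeal R))
    (hI1e : TwoSidedIdeal.span {1 - e} = (⊤ : TwoSidedIdeal R)) :
    LieSubalgebra.lieSpan F R
        ({x | ∃ r : R, x = e * r * (1 - e)} ∪ {x | ∃ r : R, x = (1 - e) * r * e}) =
      LieSubalgebra.lieSpan F R {x | ∃ a b : R, x = ⁅a, b⁆} := by
  have hf : (1-e)*(1-e) = 1-e := by
    rw [mul_sub, mul_one, sub_mul, one_mul, he]; abel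
  have hee : ∀ z : R, e*(e*z) = e*z := fun z => by rw [← mul_assoc, he]
  have hff : ∀ z : R, (1-e)*((1-e)*z) = (1-e)*z := fun z => by rw [← mul_assoc, hf]
  have hef : e*(1-e) = 0 := by rw [mul_sub, mul_one, he, sub_self]
  have hfe : (1-e)*e = 0 := by rw [sub_mul, one_mul, he, sub_self]
  have hef' : ∀ z : R, e*((1-e)*z) = 0 := fun z => by rw [← mul_assoc, hef, zero_mul]
  have hfe' : ∀ z : R, (1-e)*(e*z) = 0 := fun z => by rw [← mul_assoc, hfe, zero_mul]
  apply le_antisymm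
  · rw [LieSubalgebra.lieSpan_le]
    rintro z (⟨r, rfl⟩ | ⟨r, rfl⟩)
    · apply LieSubalgebra.subset_lieSpan
      refine ⟨e, e*r*(1-e), ?_⟩
      simp only [Ring.lie_def, mul_assoc, hee, hfe', hfe, mul_zero, sub_zero]
    · apply LieSubalgebra.subset_lieSpan
      refine ⟨(1-e)*r*e, e, ?_⟩
      simp only [Ring.lie_def, mul_assoc, he, hef', mul_zero, sub_zero]
  · rw [LieSubalgebra.lieSpan_le]
    rintro z ⟨a, b, rfl⟩
    set L := LieSubalgebra.lieSpan F R
        ({x | ∃ r : R, x = e * r * (1 - e)} ∪ {x | ∃ r : R, x = (1 - e) * r * e}) with hLdef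
    show ⁅a, b⁆ ∈ L
    have hmemL : ∀ r : R, e * r * (1 - e) ∈ L := fun r =>
      LieSubalgebra.subset_lieSpan (Or.inl ⟨r, rfl⟩)
    have hmemR : ∀ r : R, (1 - e) * r * e ∈ L := fun r =>
      LieSubalgebra.subset_lieSpan (Or.inr ⟨r, rfl⟩)
    have hO : ∀ z : R, e*z*(1-e) + (1-e)*z*e ∈ L := fun z => add_mem (hmemL z) (hmemR z)
    have hDlo : ∀ z r : R, ⁅e*z*e + (1-e)*z*(1-e), e*r*(1-e)⁆ ∈ L := by
      intro z r
      have : ⁅e*z*e + (1-e)*z*(1-e), e*r*(1-e)⁆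
          = e*(z*(e*r))*(1-e) - e*(r*((1-e)*z))*(1-e) := by
        simp only [Ring.lie_def, add_mul, mul_add, mul_assoc, hee, hff, hef', hfe', he, hf,
          mul_zero, zero_mul, add_zero, zero_add, sub_zero]
      rw [this]; exact sub_mem (hmemL _) (hmemL _)
    have hDro : ∀ z r : R, ⁅e*z*e + (1-e)*z*(1-e), (1-e)*r*e⁆ ∈ L := by
      intro z r
      have : ⁅e*z*e + (1-e)*z*(1-e), (1-e)*r*e⁆
          = (1-e)*(z*((1-e)*r))*e - (1-e)*(r*(e*z))*e := by
        simp only [Ring.lie_def, add_mul, mul_add, mul_assoc, hee, hff, hef', hfe', he, hf,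
          mul_zero, zero_mul, add_zero, zero_add, sub_zero]
      rw [this]; exact sub_mem (hmemR _) (hmemR _)
    have hDO : ∀ z w : R, ⁅e*z*e + (1-e)*z*(1-e), e*w*(1-e) + (1-e)*w*e⁆ ∈ L := by
      intro z w; rw [lie_add]; exact add_mem (hDlo z w) (hDro z w)
    have hOD : ∀ z w : R, ⁅e*z*(1-e) + (1-e)*z*e, e*w*e + (1-e)*w*(1-e)⁆ ∈ L := by
      intro z w; rw [← lie_skew]; exact neg_mem (hDO w z)
    have h11 : ∀ z w : R, ⁅e*z*e, e*w*e⁆ ∈ L := aux_corner F hchar R e he hI1e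
    have h22 : ∀ z w : R, ⁅(1-e)*z*(1-e), (1-e)*w*(1-e)⁆ ∈ L := by
      intro z w
      have h2 : TwoSidedIdeal.span {1 - (1-e)} = (⊤ : TwoSidedIdeal R) := by
        rw [sub_sub_cancel]; exact hIe
      have h3 := aux_corner F hchar R (1-e) hf h2 z w
      have hset : ({x | ∃ r : R, x = (1-e)*r*(1-(1-e))} ∪ {x | ∃ r : R, x = (1-(1-e))*r*(1-e)})
          = ({x | ∃ r : R, x = e * r * (1 - e)} ∪ {x | ∃ r : R, x = (1 - e) * r * e}) := by
        rw [sub_sub_cancel, Set.union_comm]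
      rw [hset] at h3
      exact h3
    have h1221 : ∀ z w : R, ⁅e*z*e, (1-e)*w*(1-e)⁆ = 0 := by
      intro z w
      simp only [Ring.lie_def, mul_assoc, hef', hfe', mul_zero, sub_zero]
    have hDD : ∀ z w : R, ⁅e*z*e + (1-e)*z*(1-e), e*w*e + (1-e)*w*(1-e)⁆ ∈ L := by
      intro z w
      rw [lie_add, add_lie, add_lie]
      refine add_mem (add_mem (h11 z w) ?_) (add_mem ?_ (h22 z w))
      · rw [← lie_skew, h1221 w z, neg_zero]; exact zero_mem L
      · rw [h1221]; exact zero_mem L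
    have hsplit : (⁅a, b⁆ : R)
        = ⁅e*a*e + (1-e)*a*(1-e), e*b*e + (1-e)*b*(1-e)⁆
          + ⁅e*a*e + (1-e)*a*(1-e), e*b*(1-e) + (1-e)*b*e⁆
          + (⁅e*a*(1-e) + (1-e)*a*e, e*b*e + (1-e)*b*(1-e)⁆
          + ⁅e*a*(1-e) + (1-e)*a*e, e*b*(1-e) + (1-e)*b*e⁆) := by
      simp only [Ring.lie_def]
      noncomm_ring
    rw [hsplit]
    exact add_mem (add_mem (hDD a b) (hDO a b)) (add_mem (hOD a b) (L.lie_mem (hO a) (hO b)))
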